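/- Let N be a positive integer, s, Δs ∈ ℂ^N with ‖s‖² = N, and λ ∈ ℝ with λ > 1. If ‖s + Δs‖ = ‖s + λ·Δs‖, then |⟨s, s + Δs⟩|² − |⟨s, s + λ·Δs⟩|² = (1 − λ²)·(|⟨s, Δs⟩|² − N·‖Δs‖²) and this quantity is nonnegative; moreover it equals zero if and only if Δs and s are ℂ-linearly dependent (Δs is a complex scalar multiple of s). (Identity (ap7) with its sign analysis from the proof of Theorem 1.) -/

import Mathlib

set_option maxHeartbeats 1000000 in
/-- Identity (ap7) with its sign analysis, from the proof of Theorem 1. -/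
theorem stmt_3 (N : ℕ) (hN : 0 < N) (s Δs : EuclideanSpace ℂ (Fin N))
    (hs : ‖s‖ ^ 2 = (N : ℝ)) (l : ℝ) (hl : 1 < l)
    (h : ‖s + Δs‖ = ‖s + l • Δs‖) :
    (‖(inner ℂ s (s + Δs) : ℂ)‖ ^ 2
        - ‖(inner ℂ s (s + l • Δs) : ℂ)‖ ^ 2
      = (1 - l ^ 2) * (‖(inner ℂ s Δs : ℂ)‖ ^ 2 - N * ‖Δs‖ ^ 2))
    ∧ 0 ≤ ‖(inner ℂ s (s + Δs) : ℂ)‖ ^ 2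
        - ‖(inner ℂ s (s + l • Δs) : ℂ)‖ ^ 2
    ∧ (‖(inner ℂ s (s + Δs) : ℂ)‖ ^ 2
        - ‖(inner ℂ s (s + l • Δs) : ℂ)‖ ^ 2 = 0
      ↔ ∃ c : ℂ, Δs = c • s) := by
  have hsne : s ≠ 0 := by
    intro h0
    rw [h0, norm_zero] at hs
    have : (0:ℝ) < N := by exact_mod_cast hN
    simp at hs; linarith [hs]
  have hls : l • Δs = (l:ℂ) • Δs := by
    ext i; simp [Complex.real_smul]
  set w : ℂ := inner ℂ s Δs with hw
  have hss : (inner ℂ s s : ℂ) = (N : ℂ) := by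
    rw [inner_self_eq_norm_sq_to_K]
    norm_cast
    rw [hs]
    norm_cast
  have h1 : (inner ℂ s (s + Δs) : ℂ) = (N:ℂ) + w := by
    rw [inner_add_right, hss]
  have h2 : (inner ℂ s (s + l • Δs) : ℂ) = (N:ℂ) + (l:ℂ) * w := by
    rw [hls, inner_add_right, inner_smul_right, hss]
  -- norm equation
  have hn1 : ‖s + Δs‖ ^ 2 = ‖s‖ ^ 2 + 2 * w.re + ‖Δs‖ ^ 2 := by
    have := @norm_add_sq ℂ _ _ _ _ s Δs
    simpa only [RCLike.re_to_complex, ← hw] using this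
  have hn2 : ‖s + l • Δs‖ ^ 2 = ‖s‖ ^ 2 + 2 * (l * w.re) + l ^ 2 * ‖Δs‖ ^ 2 := by
    have := @norm_add_sq ℂ _ _ _ _ s ((l:ℂ) • Δs)
    rw [hls, this, inner_smul_right]
    simp only [RCLike.re_to_complex, Complex.re_ofReal_mul, norm_smul,
      Complex.norm_real, Real.norm_eq_abs, ← hw]
    rw [mul_pow, sq_abs]
  have key : 2 * w.re + ‖Δs‖ ^ 2 = 2 * (l * w.re) + l ^ 2 * ‖Δs‖ ^ 2 := by
    have := congrArg (fun x => x ^ 2) h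
    simp only [hn1, hn2] at this
    linarith
  -- abs expansions
  have e1 : ‖(inner ℂ s (s + Δs) : ℂ)‖ ^ 2
      = (N + w.re) ^ 2 + w.im ^ 2 := by
    rw [h1, Complex.sq_norm, Complex.normSq_apply]
    simp; ring
  have e2 : ‖(inner ℂ s (s + l • Δs) : ℂ)‖ ^ 2
      = (N + l * w.re) ^ 2 + (l * w.im) ^ 2 := by
    rw [h2, Complex.sq_norm, Complex.normSq_apply]
    simp [Complex.mul_re, Complex.mul_im]; ring
  have e3 : ‖w‖ ^ 2 = w.re ^ 2 + w.im ^ 2 := by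
    rw [Complex.sq_norm, Complex.normSq_apply]; ring
  have cs : ‖w‖ ≤ ‖s‖ * ‖Δs‖ := by
    rw [hw]; exact norm_inner_le_norm s Δs
  clear_value w
  have part1 : ‖(inner ℂ s (s + Δs) : ℂ)‖ ^ 2
      - ‖(inner ℂ s (s + l • Δs) : ℂ)‖ ^ 2
      = (1 - l ^ 2) * (‖w‖ ^ 2 - N * ‖Δs‖ ^ 2) := by
    rw [e1, e2, e3]
    nlinarith [key]
  have cs2 : ‖w‖ ^ 2 ≤ N * ‖Δs‖ ^ 2 := by
    calc ‖w‖ ^ 2 ≤ (‖s‖ * ‖Δs‖) ^ 2 := by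
          exact pow_le_pow_left₀ (norm_nonneg w) cs 2
      _ = N * ‖Δs‖ ^ 2 := by rw [mul_pow, hs]
  have hlneg : 1 - l ^ 2 < 0 := by nlinarith
  refine ⟨part1, ?_, ?_⟩
  · rw [part1]
    have h1' : ‖w‖ ^ 2 - (N:ℝ) * ‖Δs‖ ^ 2 ≤ 0 := by linarith [cs2]
    nlinarith [h1', hlneg]
  · rw [part1]
    have hiff : (1 - l ^ 2) * (‖w‖ ^ 2 - N * ‖Δs‖ ^ 2) = 0
        ↔ ‖w‖ ^ 2 = N * ‖Δs‖ ^ 2 := by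
      rw [mul_eq_zero]
      constructor
      · rintro (h' | h')
        · linarith
        · linarith
      · intro h'; right; linarith
    rw [hiff]
    have hnorm : ‖w‖ ^ 2 = N * ‖Δs‖ ^ 2 ↔ ‖w‖ = ‖s‖ * ‖Δs‖ := by
      constructor
      · intro h'
        have : ‖w‖ ^ 2 = (‖s‖ * ‖Δs‖) ^ 2 := by
          rw [h', mul_pow, hs]
        have hn : (0:ℝ) ≤ ‖s‖ * ‖Δs‖ := by positivity
        nlinarith [norm_nonneg w]
      · intro h'
        rw [h']; rw [mul_pow, hs]
    rw [hnorm]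
    have tfae := (@norm_inner_eq_norm_tfae ℂ _ _ _ _ s Δs).out 0 2
    rw [hw, tfae]
    constructor
    · rintro (h' | ⟨r, hr⟩)
      · exact absurd h' hsne
      · exact ⟨r, hr⟩
    · rintro ⟨c, hc⟩; exact Or.inr ⟨c, hc⟩
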